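/- Weak duality between the primal CCNN problem with hinge loss and its dual (finite-dimensional content of Theorem 1): let d, p, n be positive integers, Φ₁,…,Φₙ ∈ ℝ^{d×p}, y₁,…,yₙ ∈ {−1, 1}, c > 0, and let α₁,…,αₙ ∈ ℝ satisfy 0 ≤ αᵢ ≤ c for all i and ‖Σᵢ αᵢyᵢΦᵢ‖₂ ≤ 1. Then for every A ∈ ℝ^{d×p}: Σᵢ αᵢ ≤ ‖A‖_* + c Σᵢ max(0, 1 − yᵢ·Tr(ΦᵢᵀA)). That is, the dual objective value of any dual-feasible α is at most the primal objective value of any A. -/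

import Mathlib

open Matrix

/-- The spectral norm (ℓ²→ℓ² operator norm, largest singular value) of a real matrix. -/
noncomputable def matSpectralNorm {m n : Type*} [Fintype m] [Fintype n] [DecidableEq n]
    (M : Matrix m n ℝ) : ℝ :=
  ‖LinearMap.toContinuousLinearMap (Matrix.toEuclideanLin M)‖

theorem isHermitian_transpose_mul_self_real {m n : Type*} [Fintype m] [Fintype n]
    (M : Matrix m n ℝ) : (Mᵀ * M).IsHermitian := by
  rw [← Matrix.conjTranspose_eq_transpose_of_trivial]
  exact Matrix.isHermitian_conjTranspose_mul_self M

/-- The nuclear norm of a real matrix: the sum of the square roots of the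
eigenvalues of `Mᵀ * M`, i.e. the sum of the singular values of `M`. -/
noncomputable def nuclearNorm {m n : Type*} [Fintype m] [Fintype n] [DecidableEq n]
    (M : Matrix m n ℝ) : ℝ :=
  ∑ i, Real.sqrt ((isHermitian_transpose_mul_self_real M).eigenvalues i)

/-- The largest (real) eigenvalue of a real square matrix, as the supremum of its
real spectrum.  For a symmetric matrix this is its largest eigenvalue. -/
noncomputable def lamMax {n : Type*} [Fintype n] [DecidableEq n] (S : Matrix n n ℝ) : ℝ :=
  sSup (spectrum ℝ S)

lemma norm_mulVec_le {d p : ℕ} (M : Matrix (Fin d) (Fin p) ℝ) (v : EuclideanSpace ℝ (Fin p)) :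
    ‖(WithLp.equiv 2 (Fin d → ℝ)).symm (M *ᵥ (WithLp.equiv 2 (Fin p → ℝ)) v)‖
      ≤ matSpectralNorm M * ‖v‖ := by
  have h := (LinearMap.toContinuousLinearMap (Matrix.toEuclideanLin M)).le_opNorm v
  simpa [matSpectralNorm, Matrix.toEuclideanLin_apply] using h

lemma trace_transpose_mul_le {d p : ℕ} (M A : Matrix (Fin d) (Fin p) ℝ) :
    (Mᵀ * A).trace ≤ matSpectralNorm M * nuclearNorm A := by
  set hH := isHermitian_transpose_mul_self_real A with hHdef
  set U : Matrix (Fin p) (Fin p) ℝ := (hH.eigenvectorUnitary : Matrix (Fin p) (Fin p) ℝ) with hU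
  set v : Fin p → (Fin p → ℝ) := fun j => ⇑(hH.eigenvectorBasis j) with hv
  have hUU : U * star U = 1 := (Matrix.mem_unitaryGroup_iff).mp hH.eigenvectorUnitary.2
  have h1 : (Mᵀ * A).trace = ((star U) * (Mᵀ * A) * U).trace := by
    rw [Matrix.trace_mul_cycle, hUU, one_mul]
  have h2 : (Mᵀ * A).trace = ∑ j, (M *ᵥ v j) ⬝ᵥ (A *ᵥ v j) := by
    rw [h1, Matrix.trace]
    apply Finset.sum_congr rfl
    intro j _
    have key : ((star U) * (Mᵀ * A) * U) j j = v j ⬝ᵥ ((Mᵀ * A) *ᵥ v j) := by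
      rw [Matrix.mul_assoc]
      simp only [Matrix.mul_apply, Matrix.mulVec, dotProduct, Matrix.star_apply,
        star_trivial, hU, hv, Finset.mul_sum]
      rfl
    rw [Matrix.diag_apply, key, ← Matrix.mulVec_mulVec, Matrix.dotProduct_mulVec,
      Matrix.vecMul_transpose]
  rw [h2]
  have hb1 : ∀ j, ‖hH.eigenvectorBasis j‖ = 1 := hH.eigenvectorBasis.orthonormal.1
  have hterm : ∀ j, (M *ᵥ v j) ⬝ᵥ (A *ᵥ v j) ≤ matSpectralNorm M * Real.sqrt (hH.eigenvalues j) := by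
    intro j
    set x : EuclideanSpace ℝ (Fin d) := (WithLp.equiv 2 (Fin d → ℝ)).symm (M *ᵥ v j) with hx
    set z : EuclideanSpace ℝ (Fin d) := (WithLp.equiv 2 (Fin d → ℝ)).symm (A *ᵥ v j) with hz
    have hdot : (M *ᵥ v j) ⬝ᵥ (A *ᵥ v j) = inner ℝ x z := by
      simp [dotProduct, PiLp.inner_apply, hx, hz]
      exact Finset.sum_congr rfl fun i _ => mul_comm _ _
    have hxn : ‖x‖ ≤ matSpectralNorm M := by
      have := norm_mulVec_le M (hH.eigenvectorBasis j)
      rwa [hb1 j, mul_one] at this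
    have hvv : v j ⬝ᵥ v j = 1 := by
      have h := hb1 j
      have h2 : (inner ℝ (hH.eigenvectorBasis j) (hH.eigenvectorBasis j) : ℝ) = 1 := by
        rw [real_inner_self_eq_norm_sq, h]; norm_num
      rw [← h2]
      simp [PiLp.inner_apply, dotProduct, hv]
      have h3 := EuclideanSpace.norm_sq_eq (hH.eigenvectorBasis j)
      rw [h] at h3
      simp only [Real.norm_eq_abs, sq_abs] at h3
      simpa [sq] using h3.symm
    have hzn : ‖z‖ = Real.sqrt (hH.eigenvalues j) := by
      have hsq : ‖z‖ ^ 2 = hH.eigenvalues j := by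
        rw [← real_inner_self_eq_norm_sq]
        have h1 : (inner ℝ z z : ℝ) = (A *ᵥ v j) ⬝ᵥ (A *ᵥ v j) := by
          simp [PiLp.inner_apply, dotProduct, hz]
          simp only [EuclideanSpace.norm_sq_eq, PiLp.toLp_apply, Real.norm_eq_abs, sq_abs]
          simp [sq]
        have h2 : v j ⬝ᵥ ((Aᵀ * A) *ᵥ v j) = (A *ᵥ v j) ⬝ᵥ (A *ᵥ v j) := by
          rw [← Matrix.mulVec_mulVec, Matrix.dotProduct_mulVec, Matrix.vecMul_transpose]
        have h3 : (Aᵀ * A) *ᵥ v j = hH.eigenvalues j • v j := hH.mulVec_eigenvectorBasis j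
        rw [h1, ← h2, h3, dotProduct_smul, smul_eq_mul, hvv, mul_one]
      rw [← hsq, Real.sqrt_sq (norm_nonneg z)]
    calc (M *ᵥ v j) ⬝ᵥ (A *ᵥ v j) = inner ℝ x z := hdot
      _ ≤ ‖x‖ * ‖z‖ := real_inner_le_norm x z
      _ ≤ matSpectralNorm M * Real.sqrt (hH.eigenvalues j) := by
          apply mul_le_mul hxn (le_of_eq hzn) (norm_nonneg z)
          exact norm_nonneg _ |>.trans hxn
  calc ∑ j, (M *ᵥ v j) ⬝ᵥ (A *ᵥ v j) ≤ ∑ j, matSpectralNorm M * Real.sqrt (hH.eigenvalues j) :=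
        Finset.sum_le_sum fun j _ => hterm j
    _ = matSpectralNorm M * nuclearNorm A := by rw [nuclearNorm, Finset.mul_sum]

/-- weak duality between the primal CCNN problem with hinge loss and
its dual: any dual-feasible `α` (with `0 ≤ αᵢ ≤ c` and `‖Σᵢ αᵢyᵢΦᵢ‖₂ ≤ 1`) has dual
objective `Σᵢ αᵢ` at most the primal objective of any `A`. -/
theorem weak_duality (d p n : ℕ) (hd : 0 < d) (hp : 0 < p) (hn : 0 < n)
    (Φ : Fin n → Matrix (Fin d) (Fin p) ℝ) (y : Fin n → ℝ)
    (hy : ∀ i, y i = 1 ∨ y i = -1) (c : ℝ) (hc : 0 < c)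
    (α : Fin n → ℝ) (hα0 : ∀ i, 0 ≤ α i) (hαc : ∀ i, α i ≤ c)
    (hfeas : matSpectralNorm (∑ i, (α i * y i) • Φ i) ≤ 1) :
    ∀ A : Matrix (Fin d) (Fin p) ℝ,
      ∑ i, α i ≤
        nuclearNorm A + c * ∑ i, max 0 (1 - y i * ((Φ i)ᵀ * A).trace) := by
  intro A
  set t : Fin n → ℝ := fun i => ((Φ i)ᵀ * A).trace with ht
  set M : Matrix (Fin d) (Fin p) ℝ := ∑ i, (α i * y i) • Φ i with hM
  have hMtrace : (Mᵀ * A).trace = ∑ i, (α i * y i) * t i := by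
    rw [hM, Matrix.transpose_sum, Matrix.sum_mul, Matrix.trace_sum]
    apply Finset.sum_congr rfl
    intro i _
    rw [Matrix.transpose_smul, Matrix.smul_mul, Matrix.trace_smul, smul_eq_mul]
  have hnn : 0 ≤ nuclearNorm A := Finset.sum_nonneg fun i _ => Real.sqrt_nonneg _
  have hMle : (Mᵀ * A).trace ≤ nuclearNorm A := by
    calc (Mᵀ * A).trace ≤ matSpectralNorm M * nuclearNorm A := trace_transpose_mul_le M A
      _ ≤ 1 * nuclearNorm A := mul_le_mul_of_nonneg_right hfeas hnn
      _ = nuclearNorm A := one_mul _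
  have hhinge : ∀ i, α i * (1 - y i * t i) ≤ c * max 0 (1 - y i * t i) := by
    intro i
    rcases le_or_gt (1 - y i * t i) 0 with h | h
    · rw [max_eq_left h]
      nlinarith [hα0 i]
    · rw [max_eq_right h.le]
      exact mul_le_mul (hαc i) le_rfl h.le hc.le
  have key : ∑ i, α i = ∑ i, α i * (1 - y i * t i) + (Mᵀ * A).trace := by
    rw [hMtrace, ← Finset.sum_add_distrib]
    apply Finset.sum_congr rfl; intro i _; ring
  rw [key]
  have hs : ∑ i, α i * (1 - y i * t i) ≤ c * ∑ i, max 0 (1 - y i * t i) := by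
    rw [Finset.mul_sum]; exact Finset.sum_le_sum fun i _ => hhinge i
  linarith
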